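/- Let k be a field, and let I = (t²,t⁵) be the ideal of k[t²,t⁵]. For every m ≥ 2, the ideal I^m of k[t²,t⁵] contains t^{2m} but not t^{2m+1}, while t^{2m+1} ∈ I^m k[t] and t^{2m+1} ∈ k[t²,t⁵]. Consequently the natural map k[t²,t⁵]/I^m → k[t]/I^m k[t] is not injective for m ≥ 2. -/

import Mathlib

open Polynomial

set_option synthInstance.maxHeartbeats 200000
set_option maxHeartbeats 1000000

/-- Support condition: a polynomial whose nonzero coefficients sit only in degrees
`d` with (`d` even and `d ≥ 2n`) or (`d` odd and `d ≥ 2n+3`). -/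
def Gd (k : Type*) [Semiring k] (n : ℕ) (p : Polynomial k) : Prop :=
  ∀ d, p.coeff d ≠ 0 → (d % 2 = 0 ∧ 2*n ≤ d) ∨ (d % 2 = 1 ∧ 2*n+3 ≤ d)

lemma Gd_mul {k : Type*} [CommSemiring k] {a b : ℕ} {p q : Polynomial k}
    (hp : Gd k a p) (hq : Gd k b q) : Gd k (a+b) (p*q) := by
  intro d hd
  rw [coeff_mul] at hd
  obtain ⟨⟨i,j⟩, hij, hne⟩ := Finset.exists_ne_zero_of_sum_ne_zero hd
  rw [Finset.HasAntidiagonal.mem_antidiagonal] at hij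
  have hi := hp i (fun h => hne (by simp [h]))
  have hj := hq j (fun h => hne (by simp [h]))
  omega

lemma Gd_add {k : Type*} [Semiring k] {a : ℕ} {p q : Polynomial k}
    (hp : Gd k a p) (hq : Gd k a q) : Gd k a (p+q) := by
  intro d hd
  rw [coeff_add] at hd
  rcases (by by_contra h; push_neg at h; simp [h.1, h.2] at hd :
    p.coeff d ≠ 0 ∨ q.coeff d ≠ 0) with h | h
  exacts [hp d h, hq d h]

lemma Gd_zero {k : Type*} [Semiring k] (a : ℕ) : Gd k a 0 := by
  intro d hd; simp at hd

lemma Gd_C {k : Type*} [Semiring k] (c : k) : Gd k 0 (C c) := by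
  intro d hd
  rcases Nat.eq_zero_or_pos d with h | h
  · left; omega
  · rw [coeff_C, if_neg (by omega)] at hd; simp at hd

lemma Gd_Xpow {k : Type*} [Semiring k] (n e : ℕ)
    (h : (e % 2 = 0 ∧ 2*n ≤ e) ∨ (e % 2 = 1 ∧ 2*n+3 ≤ e)) :
    Gd k n (X ^ e) := by
  intro d hd
  rw [coeff_X_pow] at hd
  rcases eq_or_ne d e with rfl | hne
  · exact h
  · simp [hne] at hd

lemma Gd_S {k : Type*} [CommRing k] {p : Polynomial k}
    (hp : p ∈ Algebra.adjoin k {X ^ 2, X ^ 5}) : Gd k 0 p := by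
  induction hp using Algebra.adjoin_induction with
  | mem x hx =>
      rcases hx with rfl | rfl
      · exact Gd_Xpow 0 2 (by omega)
      · exact Gd_Xpow 0 5 (by omega)
  | algebraMap c => exact Gd_C c
  | add x y _ _ hx hy => exact Gd_add hx hy
  | mul x y _ _ hx hy => exact Gd_mul (a := 0) (b := 0) hx hy

lemma Gd_Ipow {k : Type*} [Field k]
    (S : Subalgebra k (Polynomial k)) (hS : S = Algebra.adjoin k {X ^ 2, X ^ 5})
    (I : Ideal S)
    (hI : I = Ideal.span
      {(⟨X ^ 2, by rw [hS]; exact Algebra.subset_adjoin (Set.mem_insert _ _)⟩ : S),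
       (⟨X ^ 5, by rw [hS]; exact Algebra.subset_adjoin (Set.mem_insert_of_mem _ rfl)⟩ : S)})
    (n : ℕ) : ∀ x : S, x ∈ I ^ n → Gd k n (x : Polynomial k) := by
  induction n with
  | zero =>
      intro x _
      exact Gd_S (hS ▸ x.2)
  | succ n ih =>
      intro x hx
      rw [pow_succ] at hx
      refine Submodule.mul_induction_on hx ?_ (fun a b ha hb => Gd_add ha hb)
      intro r hr s hs
      have h1 : Gd k n (r : Polynomial k) := ih r hr
      have h2 : Gd k 1 (s : Polynomial k) := by
        rw [hI] at hs
        induction hs using Submodule.span_induction with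
        | mem y hy =>
            rcases hy with rfl | rfl
            · exact Gd_Xpow 1 2 (by omega)
            · exact Gd_Xpow 1 5 (by omega)
        | zero => exact Gd_zero 1
        | add y z _ _ hy hz => exact Gd_add hy hz
        | smul c y _ hy =>
            have hc : Gd k 0 (c : Polynomial k) := Gd_S (hS ▸ c.2)
            have he : ((c • y : S) : Polynomial k)
                = (c : Polynomial k) * (y : Polynomial k) := rfl
            rw [he]
            exact Gd_mul (a := 0) (b := 1) hc hy
      have he : ((r * s : S) : Polynomial k)
          = (r : Polynomial k) * (s : Polynomial k) := rfl
      rw [he]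
      exact Gd_mul h1 h2

/- STATEMENT 4: For I = (t²,t⁵) ⊆ k[t²,t⁵] and m ≥ 2: I^m contains t^{2m} but not t^{2m+1},
while t^{2m+1} ∈ I^m·k[t] and t^{2m+1} ∈ k[t²,t⁵].  Consequently the natural map
k[t²,t⁵]/I^m → k[t]/I^m·k[t] is not injective for m ≥ 2. -/
theorem stmt4 (k : Type*) [Field k] (m : ℕ) (hm : 2 ≤ m)
    (S : Subalgebra k (Polynomial k)) (hS : S = Algebra.adjoin k {X ^ 2, X ^ 5})
    (I : Ideal S)
    (hI : I = Ideal.span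
      {(⟨X ^ 2, by rw [hS]; exact Algebra.subset_adjoin (Set.mem_insert _ _)⟩ : S),
       (⟨X ^ 5, by rw [hS]; exact Algebra.subset_adjoin (Set.mem_insert_of_mem _ rfl)⟩ : S)}) :
    (∃ x : S, x ∈ I ^ m ∧ (x : Polynomial k) = X ^ (2 * m)) ∧
    (∀ x : S, x ∈ I ^ m → (x : Polynomial k) ≠ X ^ (2 * m + 1)) ∧
    ((X : Polynomial k) ^ (2 * m + 1) ∈ (I ^ m) • (⊤ : Submodule S (Polynomial k))) ∧
    ((X : Polynomial k) ^ (2 * m + 1) ∈ S) ∧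
    ¬ Function.Injective
        (Submodule.mapQ ((I ^ m : Ideal S) : Submodule S S)
          ((I ^ m) • (⊤ : Submodule S (Polynomial k))) (Algebra.linearMap S (Polynomial k))
          (by
            intro a ha
            refine Submodule.mem_comap.mpr ?_
            have : (Algebra.linearMap S (Polynomial k)) a = a • (1 : Polynomial k) := by
              simp [Algebra.linearMap_apply, Algebra.algebraMap_eq_smul_one]
            rw [this]
            exact Submodule.smul_mem_smul ha Submodule.mem_top)) := by
  set a : S :=
    (⟨X ^ 2, by rw [hS]; exact Algebra.subset_adjoin (Set.mem_insert _ _)⟩ : S) with ha_def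
  have haI : a ∈ I := by rw [hI]; exact Ideal.subset_span (Set.mem_insert _ _)
  have ham : a ^ m ∈ I ^ m := Ideal.pow_mem_pow haI m
  have haval : ((a ^ m : S) : Polynomial k) = X ^ (2 * m) := by
    have : ((a ^ m : S) : Polynomial k) = ((a : Polynomial k)) ^ m := by
      exact SubmonoidClass.coe_pow a m
    rw [this, ha_def, ← pow_mul]
  -- Part 2
  have part2 : ∀ x : S, x ∈ I ^ m → (x : Polynomial k) ≠ X ^ (2 * m + 1) := by
    intro x hx hval
    have hGd := Gd_Ipow S hS I hI m x hx
    rw [hval] at hGd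
    have := hGd (2 * m + 1) (by
      rw [coeff_X_pow, if_pos rfl]
      exact one_ne_zero)
    omega
  -- Part 3
  have part3 : (X : Polynomial k) ^ (2 * m + 1) ∈ (I ^ m) • (⊤ : Submodule S (Polynomial k)) := by
    have hmem : (a ^ m) • (X : Polynomial k) ∈ (I ^ m) • (⊤ : Submodule S (Polynomial k)) :=
      Submodule.smul_mem_smul ham Submodule.mem_top
    have heq : (a ^ m) • (X : Polynomial k) = (X : Polynomial k) ^ (2 * m + 1) := by
      have : (a ^ m) • (X : Polynomial k) = ((a ^ m : S) : Polynomial k) * X := rfl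
      rw [this, haval, pow_succ]
    rwa [heq] at hmem
  -- Part 4
  have h2S : (X : Polynomial k) ^ 2 ∈ S := by
    rw [hS]; exact Algebra.subset_adjoin (Set.mem_insert _ _)
  have h5S : (X : Polynomial k) ^ 5 ∈ S := by
    rw [hS]; exact Algebra.subset_adjoin (Set.mem_insert_of_mem _ rfl)
  have part4 : (X : Polynomial k) ^ (2 * m + 1) ∈ S := by
    have heq : (X : Polynomial k) ^ (2 * m + 1) = ((X : Polynomial k) ^ 2) ^ (m - 2) * X ^ 5 := by
      rw [← pow_mul, ← pow_add]
      congr 1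
      omega
    rw [heq]
    exact mul_mem (pow_mem h2S _) h5S
  refine ⟨⟨a ^ m, ham, haval⟩, part2, part3, part4, ?_⟩
  -- Part 5
  intro hinj
  set x' : S := ⟨X ^ (2 * m + 1), part4⟩ with hx'_def
  have h0 : Submodule.Quotient.mk (p := ((I ^ m : Ideal S) : Submodule S S)) x' = 0 := by
    apply hinj
    rw [map_zero, Submodule.mapQ_apply, Submodule.Quotient.mk_eq_zero]
    have he : (Algebra.linearMap S (Polynomial k)) x' = (X : Polynomial k) ^ (2 * m + 1) := rfl
    rw [he]
    exact part3
  rw [Submodule.Quotient.mk_eq_zero] at h0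
  exact part2 x' h0 rfl
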